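/- Let p be a strictly positive probability distribution on {0,1}^K and o a linear order on the K attributes. Let 𝒪 ∈ Seg(o) be a collection with p ∈ M(𝒪) that minimizes df among all collections in Seg(o) whose model contains p (such a collection exists since p ∈ M({A})). Then for every 𝒞 ∈ Seg(o) with p ∈ M(𝒞), every segment of 𝒪 is contained in some segment of 𝒞 (i.e. 𝒪 ⊑ 𝒞). Moreover, the minimizing collection 𝒪 is unique. -/

import Mathlib

open Finset

/-- The marginal probability `p(X = v)`: the probability that the coordinates in `X`
agree with `v`. -/
noncomputable def marg {K : ℕ} (p : (Fin K → Bool) → ℝ) (X : Finset (Fin K))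
    (v : Fin K → Bool) : ℝ :=
  ∑ t ∈ Finset.univ.filter (fun t : Fin K → Bool => ∀ i ∈ X, t i = v i), p t

/-- `p` is a probability distribution on `{0,1}^K`. -/
def IsDist {K : ℕ} (p : (Fin K → Bool) → ℝ) : Prop :=
  (∀ t, 0 ≤ p t) ∧ ∑ t : Fin K → Bool, p t = 1

/-- The empirical distribution of a dataset `D`. -/
noncomputable def empDist {K : ℕ} (D : Multiset (Fin K → Bool)) : (Fin K → Bool) → ℝ :=
  fun v => (D.count v : ℝ) / (Multiset.card D : ℝ)

/-- The entropy (base 2) of the marginal of `p` on the attribute set `X`,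
summing over representative vectors which are `false` outside of `X`. -/
noncomputable def segEntropy {K : ℕ} (p : (Fin K → Bool) → ℝ) (X : Finset (Fin K)) : ℝ :=
  -∑ v ∈ Finset.univ.filter (fun v : Fin K → Bool => ∀ i, i ∉ X → v i = false),
      marg p X v * Real.logb 2 (marg p X v)

/-- The item segment of the attributes at positions `a,…,b` in the order `o`. -/
def segIv {K : ℕ} (o : Equiv.Perm (Fin K)) (a b : ℕ) : Finset (Fin K) :=
  (Finset.univ.filter (fun k : Fin K => a ≤ (k : ℕ) ∧ (k : ℕ) ≤ b)).image o

/-- A collection `𝒞 = {C_1, …, C_L} ∈ Seg(o)` of item segments covering all attributes,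
forming an antichain, listed in the order of their first attribute.  The `i`-th segment
(for `0 ≤ i < L`) consists of the positions `s i, …, e i` in the order `o`. -/
structure SegColl (K : ℕ) where
  /-- number of segments -/
  L : ℕ
  hL : 0 < L
  /-- start position of each segment -/
  s : ℕ → ℕ
  /-- end position of each segment -/
  e : ℕ → ℕ
  s_mono : ∀ i, i + 1 < L → s i < s (i + 1)
  e_mono : ∀ i, i + 1 < L → e i < e (i + 1)
  s_le_e : ∀ i, i < L → s i ≤ e i
  s_first : s 0 = 0
  e_last : e (L - 1) = K - 1
  e_lt : ∀ i, i < L → e i < K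
  covers : ∀ i, i + 1 < L → s (i + 1) ≤ e i + 1

/-- The `i`-th item segment `C_{i+1}` of the collection, under the order `o`. -/
def SegColl.seg {K : ℕ} (𝒞 : SegColl K) (o : Equiv.Perm (Fin K)) (i : ℕ) : Finset (Fin K) :=
  segIv o (𝒞.s i) (𝒞.e i)

/-- The intersection `S_i = C_i ∩ C_{i+1}` of consecutive segments. -/
def SegColl.ovl {K : ℕ} (𝒞 : SegColl K) (o : Equiv.Perm (Fin K)) (i : ℕ) : Finset (Fin K) :=
  𝒞.seg o i ∩ 𝒞.seg o (i + 1)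

/-- Membership of a distribution `p` in the model `M(𝒞)`:
`p(A = t) ∏_{i=1}^{L-1} p(S_i = t) = ∏_{i=1}^{L} p(C_i = t)` for all `t`. -/
def memModel {K : ℕ} (o : Equiv.Perm (Fin K)) (𝒞 : SegColl K)
    (p : (Fin K → Bool) → ℝ) : Prop :=
  IsDist p ∧ ∀ t : Fin K → Bool,
    p t * ∏ i ∈ Finset.range (𝒞.L - 1), marg p (𝒞.ovl o i) t
      = ∏ i ∈ Finset.range 𝒞.L, marg p (𝒞.seg o i) t

/-- The number of free parameters `df(𝒞)`. -/
def SegColl.df {K : ℕ} (𝒞 : SegColl K) (o : Equiv.Perm (Fin K)) : ℤ :=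
  (∑ i ∈ Finset.range 𝒞.L, ((2 : ℤ) ^ (𝒞.seg o i).card - 1))
    - ∑ i ∈ Finset.range (𝒞.L - 1), ((2 : ℤ) ^ (𝒞.ovl o i).card - 1)

/-- The score of a single item segment `C`:
`score(C) = |D| H(C; D) + (log₂|D|/2)(2^{|C|} - 1)`. -/
noncomputable def segScore {K : ℕ} (D : Multiset (Fin K → Bool)) (C : Finset (Fin K)) : ℝ :=
  (Multiset.card D : ℝ) * segEntropy (empDist D) C
    + Real.logb 2 (Multiset.card D) / 2 * ((2 : ℝ) ^ C.card - 1)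

/-- The score of a collection: `score(𝒞) = ∑ score(C_i) - ∑ score(S_i)`. -/
noncomputable def collScore {K : ℕ} (D : Multiset (Fin K → Bool)) (o : Equiv.Perm (Fin K))
    (𝒞 : SegColl K) : ℝ :=
  ∑ i ∈ Finset.range 𝒞.L, segScore D (𝒞.seg o i)
    - ∑ i ∈ Finset.range (𝒞.L - 1), segScore D (𝒞.ovl o i)

/-- Two collections have the same segments (extensional equality). -/
def SegColl.SameSegs {K : ℕ} (o : Equiv.Perm (Fin K)) (𝒞 𝒟 : SegColl K) : Prop :=
  𝒞.L = 𝒟.L ∧ ∀ i < 𝒞.L, 𝒞.seg o i = 𝒟.seg o i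

section PartI
variable {K : ℕ} (p : (Fin K → Bool) → ℝ)

lemma marg_congr {X : Finset (Fin K)} {v w : Fin K → Bool}
    (h : ∀ i ∈ X, v i = w i) : marg p X v = marg p X w := by
  unfold marg
  apply Finset.sum_congr _ (fun _ _ => rfl)
  ext t
  simp only [mem_filter, mem_univ, true_and]
  constructor
  · intro ht i hi; rw [ht i hi, h i hi]
  · intro ht i hi; rw [ht i hi, h i hi]

lemma marg_pos (hpos : ∀ t, 0 < p t) (X : Finset (Fin K)) (v : Fin K → Bool) :
    0 < marg p X v := by
  unfold marg
  apply Finset.sum_pos (fun t _ => hpos t)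
  exact ⟨v, by simp⟩

lemma marg_univ (v : Fin K → Bool) : marg p univ v = p v := by
  unfold marg
  rw [show Finset.univ.filter (fun t : Fin K → Bool => ∀ i ∈ univ, t i = v i) = {v} by
    ext t; simp [funext_iff]]
  simp

/-- Key marginalization lemma: summing a marginal over all configurations of a
subset `F ⊆ X` of its coordinates gives the marginal on `X \ F`. -/
lemma sum_marg {X F : Finset (Fin K)} (hFX : F ⊆ X) (t : Fin K → Bool) :
    ∑ t' ∈ Finset.univ.filter (fun t' : Fin K → Bool => ∀ i, i ∉ F → t' i = t i),
      marg p X t' = marg p (X \ F) t := by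
  classical
  unfold marg
  rw [Finset.sum_sigma']
  apply Finset.sum_nbij' (fun x => x.2) (fun u => ⟨fun i => if i ∈ F then u i else t i, u⟩)
  · rintro ⟨t', u⟩ h
    simp only [Finset.mem_sigma, mem_filter, mem_univ, true_and] at h ⊢
    intro i hi
    rw [mem_sdiff] at hi
    rw [h.2 i hi.1]
    exact h.1 i hi.2
  · intro u hu
    simp only [mem_filter, mem_univ, true_and, Finset.mem_sigma] at hu ⊢
    constructor
    · intro i hi; simp [hi]
    · intro i hi
      by_cases h : i ∈ F
      · simp [h]
      · simp only [h, if_false]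
        exact hu i (by simp [h, mem_sdiff, hi])
  · rintro ⟨t', u⟩ h
    simp only [Finset.mem_sigma, mem_filter, mem_univ, true_and] at h
    ext i
    · by_cases hi : i ∈ F
      · simp [hi, (h.2 i (hFX hi)).symm]
      · simp [hi, h.1 i hi]
    · rfl
  · intro u hu; rfl
  · intros; rfl

end PartI

section PartII
variable {K : ℕ} (o : Equiv.Perm (Fin K))

lemma mem_segIv {a b : ℕ} {x : Fin K} :
    x ∈ segIv o a b ↔ a ≤ ((o.symm x : Fin K) : ℕ) ∧ ((o.symm x : Fin K) : ℕ) ≤ b := by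
  unfold segIv
  simp only [Finset.mem_image, mem_filter, mem_univ, true_and]
  constructor
  · rintro ⟨k, hk, rfl⟩; simpa using hk
  · intro h; exact ⟨o.symm x, h, by simp⟩

lemma segIv_full (hK : 0 < K) : segIv o 0 (K - 1) = univ := by
  ext x
  simp only [mem_segIv, mem_univ, iff_true]
  have := (o.symm x).isLt
  omega

lemma marg_segIv_full (p : (Fin K → Bool) → ℝ) (hK : 0 < K) (t : Fin K → Bool) :
    marg p (segIv o 0 (K - 1)) t = p t := by
  rw [segIv_full o hK, marg_univ]

lemma card_segIv {a b : ℕ} (hb : b < K) : (segIv o a b).card = b + 1 - a := by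
  unfold segIv
  rw [Finset.card_image_of_injective _ o.injective]
  rw [← Nat.card_Ico a (b+1)]
  apply Finset.card_nbij' (fun k : Fin K => (k : ℕ)) (fun n => ⟨min n (K-1), by omega⟩)
  · intro k hk; simp at hk ⊢; omega
  · intro n hn; simp at hn ⊢; omega
  · intro k hk; simp at hk
    apply Fin.ext
    have := k.isLt
    simp; omega
  · intro n hn; simp at hn ⊢; omega

end PartII

section PartIII
variable {K : ℕ} (p : (Fin K → Bool) → ℝ) (o : Equiv.Perm (Fin K))

lemma marg_eq_of_off {F X : Finset (Fin K)} {t t' : Fin K → Bool}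
    (h : ∀ i, i ∉ F → t' i = t i) (hXF : ∀ i ∈ X, i ∉ F) :
    marg p X t' = marg p X t :=
  marg_congr p fun i hi => h i (hXF i hi)

/-- Summing `marg X · marg Y` over configurations of `F ⊆ X`, `F` disjoint from `Y`. -/
lemma sum_marg_mul {X Y F : Finset (Fin K)} (hFX : F ⊆ X) (hYF : ∀ i ∈ Y, i ∉ F)
    (t : Fin K → Bool) :
    ∑ t' ∈ Finset.univ.filter (fun t' : Fin K → Bool => ∀ i, i ∉ F → t' i = t i),
      marg p X t' * marg p Y t' = marg p (X \ F) t * marg p Y t := by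
  calc ∑ t' ∈ Finset.univ.filter (fun t' : Fin K → Bool => ∀ i, i ∉ F → t' i = t i),
      marg p X t' * marg p Y t'
      = ∑ t' ∈ Finset.univ.filter (fun t' : Fin K → Bool => ∀ i, i ∉ F → t' i = t i),
      marg p X t' * marg p Y t := by
        refine Finset.sum_congr rfl fun t' ht' => ?_
        rw [marg_eq_of_off p (mem_filter.mp ht').2 hYF]
    _ = _ := by rw [← Finset.sum_mul, sum_marg p hFX]

/-- Validity of the cut `(u,v)`: the conditional independence
`X_{[0,v]} ⟂ X_{[u,K-1]} | X_{[u,v]}`. -/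
def Valid (u v : ℕ) : Prop :=
  ∀ t, marg p (segIv o 0 v) t * marg p (segIv o u (K - 1)) t
    = p t * marg p (segIv o u v) t

lemma widen_right (hpos : ∀ t, 0 < p t) {u v v' : ℕ}
    (hu : u ≤ v + 1) (hv : v ≤ v') (hv' : v' ≤ K - 1) (hK : 0 < K)
    (hV : Valid p o u v) : Valid p o u v' := by
  intro t
  have hFX : segIv o (v' + 1) (K - 1) ⊆ segIv o u (K - 1) := by
    intro x hx; rw [mem_segIv] at hx ⊢; omega
  have hUdiff : univ \ segIv o (v' + 1) (K - 1) = segIv o 0 v' := by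
    rw [← segIv_full o hK]; ext x; simp only [mem_sdiff, mem_segIv]
    have := ((o.symm x) : Fin K).isLt; omega
  have hXdiff : segIv o u (K - 1) \ segIv o (v' + 1) (K - 1) = segIv o u v' := by
    ext x; simp only [mem_sdiff, mem_segIv]
    have := ((o.symm x) : Fin K).isLt; omega
  have hY0 : ∀ i ∈ segIv o 0 v, i ∉ segIv o (v' + 1) (K - 1) := by
    intro x hx; rw [mem_segIv] at hx ⊢; omega
  have hYuv : ∀ i ∈ segIv o u v, i ∉ segIv o (v' + 1) (K - 1) := by
    intro x hx; rw [mem_segIv] at hx ⊢; omega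
  have h1 : marg p (segIv o u v') t * marg p (segIv o 0 v) t
      = marg p (segIv o 0 v') t * marg p (segIv o u v) t := by
    have hl := sum_marg_mul p (X := segIv o u (K-1)) (Y := segIv o 0 v) hFX hY0 t
    have hr := sum_marg_mul p (X := univ) (Y := segIv o u v) (Finset.subset_univ _) hYuv t
    rw [hXdiff] at hl; rw [hUdiff] at hr
    rw [← hl, ← hr]
    refine Finset.sum_congr rfl fun t' _ => ?_
    rw [marg_univ, ← hV t']
    ring
  have hvpos := marg_pos p hpos (segIv o u v) t
  apply mul_right_cancel₀ (ne_of_gt hvpos)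
  calc marg p (segIv o 0 v') t * marg p (segIv o u (K-1)) t * marg p (segIv o u v) t
      = (marg p (segIv o 0 v') t * marg p (segIv o u v) t) * marg p (segIv o u (K-1)) t := by ring
    _ = (marg p (segIv o u v') t * marg p (segIv o 0 v) t) * marg p (segIv o u (K-1)) t := by rw [← h1]
    _ = (marg p (segIv o 0 v) t * marg p (segIv o u (K-1)) t) * marg p (segIv o u v') t := by ring
    _ = (p t * marg p (segIv o u v) t) * marg p (segIv o u v') t := by rw [hV t]
    _ = p t * marg p (segIv o u v') t * marg p (segIv o u v) t := by ring

lemma widen_left (hpos : ∀ t, 0 < p t) {u u' v : ℕ}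
    (hu' : 1 ≤ u') (hu'u : u' ≤ u) (hu : u ≤ v + 1) (hK : 0 < K)
    (hV : Valid p o u v) : Valid p o u' v := by
  intro t
  have hFX : segIv o 0 (u' - 1) ⊆ segIv o 0 v := by
    intro x hx; rw [mem_segIv] at hx ⊢; omega
  have hUdiff : univ \ segIv o 0 (u' - 1) = segIv o u' (K - 1) := by
    rw [← segIv_full o hK]; ext x; simp only [mem_sdiff, mem_segIv]
    have := ((o.symm x) : Fin K).isLt; omega
  have hXdiff : segIv o 0 v \ segIv o 0 (u' - 1) = segIv o u' v := by
    ext x; simp only [mem_sdiff, mem_segIv]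
    have := ((o.symm x) : Fin K).isLt; omega
  have hYK : ∀ i ∈ segIv o u (K - 1), i ∉ segIv o 0 (u' - 1) := by
    intro x hx; rw [mem_segIv] at hx ⊢; omega
  have hYuv : ∀ i ∈ segIv o u v, i ∉ segIv o 0 (u' - 1) := by
    intro x hx; rw [mem_segIv] at hx ⊢; omega
  have h1 : marg p (segIv o u' v) t * marg p (segIv o u (K-1)) t
      = marg p (segIv o u' (K-1)) t * marg p (segIv o u v) t := by
    have hl := sum_marg_mul p (X := segIv o 0 v) (Y := segIv o u (K-1)) hFX hYK t
    have hr := sum_marg_mul p (X := univ) (Y := segIv o u v) (Finset.subset_univ _) hYuv t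
    rw [hXdiff] at hl; rw [hUdiff] at hr
    rw [← hl, ← hr]
    refine Finset.sum_congr rfl fun t' _ => ?_
    rw [marg_univ, hV t']
  have hvpos := marg_pos p hpos (segIv o u v) t
  apply mul_right_cancel₀ (ne_of_gt hvpos)
  calc marg p (segIv o 0 v) t * marg p (segIv o u' (K-1)) t * marg p (segIv o u v) t
      = (marg p (segIv o u' (K-1)) t * marg p (segIv o u v) t) * marg p (segIv o 0 v) t := by ring
    _ = (marg p (segIv o u' v) t * marg p (segIv o u (K-1)) t) * marg p (segIv o 0 v) t := by rw [← h1]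
    _ = (marg p (segIv o 0 v) t * marg p (segIv o u (K-1)) t) * marg p (segIv o u' v) t := by ring
    _ = (p t * marg p (segIv o u v) t) * marg p (segIv o u' v) t := by rw [hV t]
    _ = p t * marg p (segIv o u' v) t * marg p (segIv o u v) t := by ring

end PartIII

section PartIV
variable {K : ℕ} (𝒞 : SegColl K)

lemma SegColl.s_mono_le : ∀ {i j}, i ≤ j → j < 𝒞.L → 𝒞.s i ≤ 𝒞.s j := by
  intro i j hij hj
  induction j with
  | zero =>
    have : i = 0 := by omega
    subst this; exact le_refl _
  | succ j ih =>
    rcases Nat.eq_or_lt_of_le hij with h | h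
    · subst h; exact le_refl _
    · exact le_trans (ih (by omega) (by omega)) (le_of_lt (𝒞.s_mono j hj))

lemma SegColl.e_mono_le : ∀ {i j}, i ≤ j → j < 𝒞.L → 𝒞.e i ≤ 𝒞.e j := by
  intro i j hij hj
  induction j with
  | zero =>
    have : i = 0 := by omega
    subst this; exact le_refl _
  | succ j ih =>
    rcases Nat.eq_or_lt_of_le hij with h | h
    · subst h; exact le_refl _
    · exact le_trans (ih (by omega) (by omega)) (le_of_lt (𝒞.e_mono j hj))

lemma SegColl.s_mono_lt : ∀ {i j}, i < j → j < 𝒞.L → 𝒞.s i < 𝒞.s j := by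
  intro i j hij hj
  have h1 : 𝒞.s i ≤ 𝒞.s (j - 1) := 𝒞.s_mono_le (by omega) (by omega)
  have h2 : 𝒞.s (j - 1) < 𝒞.s ((j-1) + 1) := 𝒞.s_mono (j-1) (by omega)
  rw [show (j - 1) + 1 = j by omega] at h2
  omega

lemma SegColl.e_mono_lt : ∀ {i j}, i < j → j < 𝒞.L → 𝒞.e i < 𝒞.e j := by
  intro i j hij hj
  have h1 : 𝒞.e i ≤ 𝒞.e (j - 1) := 𝒞.e_mono_le (by omega) (by omega)
  have h2 : 𝒞.e (j - 1) < 𝒞.e ((j-1) + 1) := 𝒞.e_mono (j-1) (by omega)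
  rw [show (j - 1) + 1 = j by omega] at h2
  omega

lemma SegColl.posK (𝒟 : SegColl K) : 0 < K := by
  have := 𝒟.e_lt 0 𝒟.hL
  omega

lemma SegColl.ovl_eq (o : Equiv.Perm (Fin K)) {j : ℕ} (hj : j + 1 < 𝒞.L) :
    𝒞.ovl o j = segIv o (𝒞.s (j + 1)) (𝒞.e j) := by
  have h1 := 𝒞.s_mono j hj
  have h2 := 𝒞.e_mono j hj
  ext x
  simp only [SegColl.ovl, SegColl.seg, Finset.mem_inter, mem_segIv]
  omega

end PartIV

section PartV
variable {K : ℕ} (p : (Fin K → Bool) → ℝ) (o : Equiv.Perm (Fin K))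

lemma pref (hpos : ∀ t, 0 < p t) (𝒞 : SegColl K)
    (hm : ∀ t, p t * ∏ i ∈ Finset.range (𝒞.L - 1), marg p (𝒞.ovl o i) t
      = ∏ i ∈ Finset.range 𝒞.L, marg p (𝒞.seg o i) t) :
    ∀ d j, j + 1 + d = 𝒞.L → ∀ t,
      marg p (segIv o 0 (𝒞.e j)) t * ∏ i ∈ Finset.range j, marg p (𝒞.ovl o i) t
        = ∏ i ∈ Finset.range (j + 1), marg p (𝒞.seg o i) t := by
  have hK := 𝒞.posK
  intro d
  induction d with
  | zero =>
    intro j hj t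
    have hj' : j = 𝒞.L - 1 := by omega
    subst hj'
    rw [𝒞.e_last, marg_segIv_full o p hK, show 𝒞.L - 1 + 1 = 𝒞.L from by omega]
    exact hm t
  | succ d ih =>
    intro j hj t
    have hjL : j + 1 < 𝒞.L := by omega
    have he := 𝒞.e_mono j hjL
    have hcov := 𝒞.covers j hjL
    have hdiff1 : segIv o 0 (𝒞.e (j+1)) \ segIv o (𝒞.e j + 1) (𝒞.e (j+1))
        = segIv o 0 (𝒞.e j) := by
      ext x; simp only [mem_sdiff, mem_segIv]; omega
    have hFX : segIv o (𝒞.e j + 1) (𝒞.e (j+1)) ⊆ segIv o 0 (𝒞.e (j+1)) := by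
      intro x hx; rw [mem_segIv] at hx ⊢; omega
    have hFseg : segIv o (𝒞.e j + 1) (𝒞.e (j+1)) ⊆ 𝒞.seg o (j+1) := by
      intro x hx; rw [mem_segIv] at hx; rw [SegColl.seg, mem_segIv]; omega
    have hdiff2 : 𝒞.seg o (j+1) \ segIv o (𝒞.e j + 1) (𝒞.e (j+1)) = 𝒞.ovl o j := by
      rw [𝒞.ovl_eq o hjL, SegColl.seg]; ext x; simp only [mem_sdiff, mem_segIv]; omega
    have hovl_const : ∀ t', (∀ i, i ∉ segIv o (𝒞.e j + 1) (𝒞.e (j+1)) → t' i = t i) →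
        ∀ i ∈ Finset.range (j+1), marg p (𝒞.ovl o i) t' = marg p (𝒞.ovl o i) t := by
      intro t' ht' i hi
      rw [Finset.mem_range] at hi
      have hiL : i + 1 < 𝒞.L := by omega
      refine marg_eq_of_off p ht' ?_
      intro x hx
      rw [𝒞.ovl_eq o hiL, mem_segIv] at hx
      rw [mem_segIv]
      have : 𝒞.e i ≤ 𝒞.e j := 𝒞.e_mono_le (by omega) (by omega)
      omega
    have hseg_const : ∀ t', (∀ i, i ∉ segIv o (𝒞.e j + 1) (𝒞.e (j+1)) → t' i = t i) →
        ∀ i ∈ Finset.range (j+1), marg p (𝒞.seg o i) t' = marg p (𝒞.seg o i) t := by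
      intro t' ht' i hi
      rw [Finset.mem_range] at hi
      refine marg_eq_of_off p ht' ?_
      intro x hx
      rw [SegColl.seg, mem_segIv] at hx
      rw [mem_segIv]
      have : 𝒞.e i ≤ 𝒞.e j := 𝒞.e_mono_le (by omega) (by omega)
      omega
    have key : ∀ t' ∈ Finset.univ.filter
        (fun t' : Fin K → Bool => ∀ i, i ∉ segIv o (𝒞.e j + 1) (𝒞.e (j+1)) → t' i = t i),
        marg p (segIv o 0 (𝒞.e (j+1))) t' * (∏ i ∈ Finset.range (j+1), marg p (𝒞.ovl o i) t)
          = (∏ i ∈ Finset.range (j+1), marg p (𝒞.seg o i) t) * marg p (𝒞.seg o (j+1)) t' := by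
      intro t' ht'
      rw [mem_filter] at ht'
      have h := ih (j+1) (by omega) t'
      rw [Finset.prod_range_succ (f := fun i => marg p (𝒞.seg o i) t')] at h
      rw [show (∏ i ∈ Finset.range (j+1), marg p (𝒞.ovl o i) t')
          = ∏ i ∈ Finset.range (j+1), marg p (𝒞.ovl o i) t from
          Finset.prod_congr rfl (hovl_const t' ht'.2)] at h
      rw [show (∏ i ∈ Finset.range (j+1), marg p (𝒞.seg o i) t')
          = ∏ i ∈ Finset.range (j+1), marg p (𝒞.seg o i) t from
          Finset.prod_congr rfl (hseg_const t' ht'.2)] at h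
      exact h
    have hsum := Finset.sum_congr rfl key
    rw [← Finset.sum_mul, ← Finset.mul_sum, sum_marg p hFX t, sum_marg p hFseg t,
      hdiff1, hdiff2] at hsum
    rw [Finset.prod_range_succ] at hsum
    have hc := marg_pos p hpos (𝒞.ovl o j) t
    apply mul_right_cancel₀ (ne_of_gt hc)
    linear_combination hsum

lemma suf (hpos : ∀ t, 0 < p t) (𝒞 : SegColl K)
    (hm : ∀ t, p t * ∏ i ∈ Finset.range (𝒞.L - 1), marg p (𝒞.ovl o i) t
      = ∏ i ∈ Finset.range 𝒞.L, marg p (𝒞.seg o i) t) :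
    ∀ j, j < 𝒞.L → ∀ t,
      marg p (segIv o (𝒞.s j) (K - 1)) t * ∏ i ∈ Finset.Ico j (𝒞.L - 1), marg p (𝒞.ovl o i) t
        = ∏ i ∈ Finset.Ico j 𝒞.L, marg p (𝒞.seg o i) t := by
  have hK := 𝒞.posK
  intro j
  induction j with
  | zero =>
    intro _ t
    rw [𝒞.s_first, marg_segIv_full o p hK, ← Finset.range_eq_Ico, ← Finset.range_eq_Ico]
    exact hm t
  | succ j ih =>
    intro hjL t
    have hj : j < 𝒞.L := by omega
    have hs := 𝒞.s_mono j hjL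
    have hcov := 𝒞.covers j hjL
    have hdiff1 : segIv o (𝒞.s j) (K - 1) \ segIv o (𝒞.s j) (𝒞.s (j+1) - 1)
        = segIv o (𝒞.s (j+1)) (K - 1) := by
      ext x; simp only [mem_sdiff, mem_segIv]
      have := ((o.symm x) : Fin K).isLt; omega
    have hFX : segIv o (𝒞.s j) (𝒞.s (j+1) - 1) ⊆ segIv o (𝒞.s j) (K - 1) := by
      intro x hx; rw [mem_segIv] at hx ⊢; omega
    have hFseg : segIv o (𝒞.s j) (𝒞.s (j+1) - 1) ⊆ 𝒞.seg o j := by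
      intro x hx; rw [mem_segIv] at hx; rw [SegColl.seg, mem_segIv]; omega
    have hdiff2 : 𝒞.seg o j \ segIv o (𝒞.s j) (𝒞.s (j+1) - 1) = 𝒞.ovl o j := by
      rw [𝒞.ovl_eq o hjL, SegColl.seg]; ext x; simp only [mem_sdiff, mem_segIv]; omega
    have hovl_const : ∀ t', (∀ i, i ∉ segIv o (𝒞.s j) (𝒞.s (j+1) - 1) → t' i = t i) →
        ∀ i ∈ Finset.Ico j (𝒞.L - 1), marg p (𝒞.ovl o i) t' = marg p (𝒞.ovl o i) t := by
      intro t' ht' i hi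
      rw [Finset.mem_Ico] at hi
      have hiL : i + 1 < 𝒞.L := by omega
      refine marg_eq_of_off p ht' ?_
      intro x hx
      rw [𝒞.ovl_eq o hiL, mem_segIv] at hx
      rw [mem_segIv]
      have : 𝒞.s (j+1) ≤ 𝒞.s (i+1) := 𝒞.s_mono_le (by omega) (by omega)
      omega
    have hseg_const : ∀ t', (∀ i, i ∉ segIv o (𝒞.s j) (𝒞.s (j+1) - 1) → t' i = t i) →
        ∀ i ∈ Finset.Ico (j+1) 𝒞.L, marg p (𝒞.seg o i) t' = marg p (𝒞.seg o i) t := by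
      intro t' ht' i hi
      rw [Finset.mem_Ico] at hi
      refine marg_eq_of_off p ht' ?_
      intro x hx
      rw [SegColl.seg, mem_segIv] at hx
      rw [mem_segIv]
      have : 𝒞.s (j+1) ≤ 𝒞.s i := 𝒞.s_mono_le (by omega) (by omega)
      omega
    have key : ∀ t' ∈ Finset.univ.filter
        (fun t' : Fin K → Bool => ∀ i, i ∉ segIv o (𝒞.s j) (𝒞.s (j+1) - 1) → t' i = t i),
        marg p (segIv o (𝒞.s j) (K - 1)) t' * (∏ i ∈ Finset.Ico j (𝒞.L - 1), marg p (𝒞.ovl o i) t)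
          = (∏ i ∈ Finset.Ico (j+1) 𝒞.L, marg p (𝒞.seg o i) t) * marg p (𝒞.seg o j) t' := by
      intro t' ht'
      rw [mem_filter] at ht'
      have h := ih hj t'
      rw [Finset.prod_eq_prod_Ico_succ_bot (by omega : j < 𝒞.L)
        (fun i => marg p (𝒞.seg o i) t')] at h
      rw [show (∏ i ∈ Finset.Ico j (𝒞.L - 1), marg p (𝒞.ovl o i) t')
          = ∏ i ∈ Finset.Ico j (𝒞.L - 1), marg p (𝒞.ovl o i) t from
          Finset.prod_congr rfl (hovl_const t' ht'.2)] at h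
      rw [show (∏ i ∈ Finset.Ico (j+1) 𝒞.L, marg p (𝒞.seg o i) t')
          = ∏ i ∈ Finset.Ico (j+1) 𝒞.L, marg p (𝒞.seg o i) t from
          Finset.prod_congr rfl (hseg_const t' ht'.2)] at h
      rw [h]
      ring
    have hsum := Finset.sum_congr rfl key
    rw [← Finset.sum_mul, ← Finset.mul_sum, sum_marg p hFX t, sum_marg p hFseg t,
      hdiff1, hdiff2] at hsum
    rw [Finset.prod_eq_prod_Ico_succ_bot (by omega : j < 𝒞.L - 1)
      (fun i => marg p (𝒞.ovl o i) t)] at hsum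
    have hc := marg_pos p hpos (𝒞.ovl o j) t
    apply mul_right_cancel₀ (ne_of_gt hc)
    linear_combination hsum

lemma valid_of_mem (hpos : ∀ t, 0 < p t) (𝒞 : SegColl K)
    (hm : ∀ t, p t * ∏ i ∈ Finset.range (𝒞.L - 1), marg p (𝒞.ovl o i) t
      = ∏ i ∈ Finset.range 𝒞.L, marg p (𝒞.seg o i) t)
    {j : ℕ} (hj : j + 1 < 𝒞.L) : Valid p o (𝒞.s (j + 1)) (𝒞.e j) := by
  intro t
  have hd : j + 1 + (𝒞.L - (j + 1)) = 𝒞.L := by omega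
  have hP := pref p o hpos 𝒞 hm (𝒞.L - (j + 1)) j hd t
  have hS := suf p o hpos 𝒞 hm (j + 1) hj t
  have hm' := hm t
  have hsplit1 : (∏ i ∈ Finset.range 𝒞.L, marg p (𝒞.seg o i) t)
      = (∏ i ∈ Finset.range (j + 1), marg p (𝒞.seg o i) t)
        * ∏ i ∈ Finset.Ico (j + 1) 𝒞.L, marg p (𝒞.seg o i) t := by
    rw [Finset.range_eq_Ico, ← Finset.prod_Ico_consecutive _ (by omega : 0 ≤ j + 1)
      (by omega : j + 1 ≤ 𝒞.L), ← Finset.range_eq_Ico]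
  have hsplit2 : (∏ i ∈ Finset.range (𝒞.L - 1), marg p (𝒞.ovl o i) t)
      = (∏ i ∈ Finset.range j, marg p (𝒞.ovl o i) t)
        * (marg p (𝒞.ovl o j) t * ∏ i ∈ Finset.Ico (j + 1) (𝒞.L - 1), marg p (𝒞.ovl o i) t) := by
    rw [Finset.range_eq_Ico, ← Finset.prod_Ico_consecutive _ (by omega : 0 ≤ j)
      (by omega : j ≤ 𝒞.L - 1), ← Finset.range_eq_Ico,
      Finset.prod_eq_prod_Ico_succ_bot (by omega : j < 𝒞.L - 1)]
  rw [hsplit1, hsplit2] at hm'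
  rw [← 𝒞.ovl_eq o hj]
  have h1 := marg_pos p hpos (𝒞.ovl o j) t
  have hprodpos : 0 < (∏ i ∈ Finset.range j, marg p (𝒞.ovl o i) t)
      * ∏ i ∈ Finset.Ico (j + 1) (𝒞.L - 1), marg p (𝒞.ovl o i) t := by
    apply mul_pos <;> exact Finset.prod_pos (fun i _ => marg_pos p hpos _ t)
  apply mul_right_cancel₀ (ne_of_gt hprodpos)
  calc marg p (segIv o 0 (𝒞.e j)) t * marg p (segIv o (𝒞.s (j+1)) (K - 1)) t
      * ((∏ i ∈ Finset.range j, marg p (𝒞.ovl o i) t)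
        * ∏ i ∈ Finset.Ico (j + 1) (𝒞.L - 1), marg p (𝒞.ovl o i) t)
      = (marg p (segIv o 0 (𝒞.e j)) t * ∏ i ∈ Finset.range j, marg p (𝒞.ovl o i) t)
        * (marg p (segIv o (𝒞.s (j+1)) (K - 1)) t
          * ∏ i ∈ Finset.Ico (j + 1) (𝒞.L - 1), marg p (𝒞.ovl o i) t) := by ring
    _ = (∏ i ∈ Finset.range (j + 1), marg p (𝒞.seg o i) t)
        * ∏ i ∈ Finset.Ico (j + 1) 𝒞.L, marg p (𝒞.seg o i) t := by rw [hP, hS]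
    _ = p t * ((∏ i ∈ Finset.range j, marg p (𝒞.ovl o i) t)
        * (marg p (𝒞.ovl o j) t * ∏ i ∈ Finset.Ico (j + 1) (𝒞.L - 1), marg p (𝒞.ovl o i) t)) := hm'.symm
    _ = p t * marg p (𝒞.ovl o j) t * ((∏ i ∈ Finset.range j, marg p (𝒞.ovl o i) t)
        * ∏ i ∈ Finset.Ico (j + 1) (𝒞.L - 1), marg p (𝒞.ovl o i) t) := by ring

lemma mem_of_valid (hpos : ∀ t, 0 < p t) (𝒞 : SegColl K)
    (hv : ∀ j, j + 1 < 𝒞.L → Valid p o (𝒞.s (j + 1)) (𝒞.e j)) :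
    ∀ t, p t * ∏ i ∈ Finset.range (𝒞.L - 1), marg p (𝒞.ovl o i) t
      = ∏ i ∈ Finset.range 𝒞.L, marg p (𝒞.seg o i) t := by
  have hK := 𝒞.posK
  have claim : ∀ j, j < 𝒞.L → ∀ t,
      marg p (segIv o 0 (𝒞.e j)) t * ∏ i ∈ Finset.range j, marg p (𝒞.ovl o i) t
        = ∏ i ∈ Finset.range (j + 1), marg p (𝒞.seg o i) t := by
    intro j
    induction j with
    | zero =>
      intro _ t
      simp only [Finset.range_zero, Finset.prod_empty, mul_one, zero_add,
        Finset.prod_range_one]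
      rw [show 𝒞.seg o 0 = segIv o (𝒞.s 0) (𝒞.e 0) from rfl, 𝒞.s_first]
    | succ j ih =>
      intro hjL t
      have hj : j < 𝒞.L := by omega
      have he := 𝒞.e_mono j hjL
      have hcov := 𝒞.covers j hjL
      have heK := 𝒞.e_lt (j + 1) hjL
      have hV := hv j hjL
      -- prefix version of the validity identity
      have hdiffU : univ \ segIv o (𝒞.e (j+1) + 1) (K - 1) = segIv o 0 (𝒞.e (j+1)) := by
        rw [← segIv_full o hK]; ext x; simp only [mem_sdiff, mem_segIv]
        have := ((o.symm x) : Fin K).isLt; omega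
      have hFX : segIv o (𝒞.e (j+1) + 1) (K - 1) ⊆ segIv o (𝒞.s (j+1)) (K - 1) := by
        intro x hx; rw [mem_segIv] at hx ⊢; omega
      have hdiff2 : segIv o (𝒞.s (j+1)) (K - 1) \ segIv o (𝒞.e (j+1) + 1) (K - 1)
          = segIv o (𝒞.s (j+1)) (𝒞.e (j+1)) := by
        ext x; simp only [mem_sdiff, mem_segIv]
        have := ((o.symm x) : Fin K).isLt; omega
      have hY0 : ∀ i ∈ segIv o 0 (𝒞.e j), i ∉ segIv o (𝒞.e (j+1) + 1) (K - 1) := by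
        intro x hx; rw [mem_segIv] at hx ⊢; omega
      have hYuv : ∀ i ∈ segIv o (𝒞.s (j+1)) (𝒞.e j), i ∉ segIv o (𝒞.e (j+1) + 1) (K - 1) := by
        intro x hx; rw [mem_segIv] at hx ⊢; omega
      have hl := sum_marg_mul p (X := segIv o (𝒞.s (j+1)) (K - 1)) (Y := segIv o 0 (𝒞.e j))
        hFX hY0 t
      have hr := sum_marg_mul p (X := univ) (Y := segIv o (𝒞.s (j+1)) (𝒞.e j))
        (Finset.subset_univ _) hYuv t
      rw [hdiff2] at hl; rw [hdiffU] at hr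
      have hPV : marg p (segIv o (𝒞.s (j+1)) (𝒞.e (j+1))) t * marg p (segIv o 0 (𝒞.e j)) t
          = marg p (segIv o 0 (𝒞.e (j+1))) t * marg p (segIv o (𝒞.s (j+1)) (𝒞.e j)) t := by
        rw [← hl, ← hr]
        refine Finset.sum_congr rfl fun t' _ => ?_
        rw [marg_univ, ← hV t']
        ring
      -- assemble
      rw [Finset.prod_range_succ, Finset.prod_range_succ (f := fun i => marg p (𝒞.seg o i) t),
        𝒞.ovl_eq o hjL]
      have hseg1 : 𝒞.seg o (j+1) = segIv o (𝒞.s (j+1)) (𝒞.e (j+1)) := rfl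
      rw [hseg1, ← ih hj t]
      linear_combination (-(∏ i ∈ Finset.range j, marg p (𝒞.ovl o i) t)) * hPV
  intro t
  have hL := 𝒞.hL
  have h := claim (𝒞.L - 1) (by omega) t
  rw [𝒞.e_last, marg_segIv_full o p hK, show 𝒞.L - 1 + 1 = 𝒞.L from by omega] at h
  exact h

section PartVI
variable {K : ℕ}

lemma pow_ineq (x y z : ℕ) (hx : 1 ≤ x) (hz : 1 ≤ z) :
    (2:ℤ)^(x+y) + 2^(y+z) < 2^y + 2^(x+y+z) := by
  have hx2 : (2:ℤ) ≤ 2^x := by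
    calc (2:ℤ) = 2^1 := (pow_one 2).symm
    _ ≤ 2^x := pow_le_pow_right₀ (by norm_num) hx
  have hz2 : (2:ℤ) ≤ 2^z := by
    calc (2:ℤ) = 2^1 := (pow_one 2).symm
    _ ≤ 2^z := pow_le_pow_right₀ (by norm_num) hz
  have hy : (0:ℤ) < 2^y := pow_pos (by norm_num) y
  have key : (2:ℤ)^x + 2^z < 1 + 2^x * 2^z := by nlinarith
  calc (2:ℤ)^(x+y) + 2^(y+z) = 2^y * (2^x + 2^z) := by rw [pow_add, pow_add]; ring
    _ < 2^y * (1 + 2^x * 2^z) := by exact (mul_lt_mul_iff_right₀ hy).mpr key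
    _ = 2^y + 2^(x+y+z) := by rw [pow_add, pow_add]; ring

lemma sum_sub_except {n i : ℕ} (hi : i < n) (f g : ℕ → ℤ)
    (h : ∀ k < n, k ≠ i → f k = g k) :
    ∑ k ∈ Finset.range n, f k - ∑ k ∈ Finset.range n, g k = f i - g i := by
  rw [← Finset.add_sum_erase _ f (Finset.mem_range.mpr hi),
    ← Finset.add_sum_erase _ g (Finset.mem_range.mpr hi)]
  rw [Finset.sum_congr rfl (fun k hk => h k
    (Finset.mem_range.mp (Finset.mem_of_mem_erase hk)) (Finset.ne_of_mem_erase hk))]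
  ring

lemma sum_skip {f : ℕ → ℤ} {n i : ℕ} (hi : i < n) (g : ℕ → ℤ)
    (h1 : ∀ k < i, g k = f k) (h2 : ∀ k, i ≤ k → k < n - 1 → g k = f (k+1)) :
    ∑ k ∈ Finset.range (n-1), g k = ∑ k ∈ Finset.range n, f k - f i := by
  have e1 : ∑ k ∈ Finset.range n, f k
      = (∑ k ∈ Finset.range i, f k) + f i + ∑ k ∈ Finset.Ico (i+1) n, f k := by
    rw [Finset.range_eq_Ico,
      ← Finset.sum_Ico_consecutive f (by omega : 0 ≤ i) (by omega : i ≤ n),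
      Finset.sum_eq_sum_Ico_succ_bot (by omega : i < n) f, ← Finset.range_eq_Ico]
    ring
  have e2 : ∑ k ∈ Finset.range (n-1), g k
      = (∑ k ∈ Finset.range i, g k) + ∑ k ∈ Finset.Ico i (n-1), g k := by
    rw [Finset.range_eq_Ico,
      ← Finset.sum_Ico_consecutive g (by omega : 0 ≤ i) (by omega : i ≤ n - 1),
      ← Finset.range_eq_Ico]
  have e3 : ∑ k ∈ Finset.range i, g k = ∑ k ∈ Finset.range i, f k :=
    Finset.sum_congr rfl fun k hk => h1 k (Finset.mem_range.mp hk)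
  have e4 : ∑ k ∈ Finset.Ico i (n-1), g k = ∑ k ∈ Finset.Ico (i+1) n, f k := by
    rw [Finset.sum_Ico_eq_sum_range, Finset.sum_Ico_eq_sum_range]
    rw [show n - (i+1) = n - 1 - i from by omega]
    refine Finset.sum_congr rfl fun j hj => ?_
    rw [Finset.mem_range] at hj
    rw [h2 (i + j) (by omega) (by omega), show i + 1 + j = i + j + 1 from by omega]
  rw [e2, e3, e4, e1]
  ring

lemma sum_insert1 {f : ℕ → ℤ} {n i : ℕ} (hi : i ≤ n) (A : ℤ) (g : ℕ → ℤ)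
    (h1 : ∀ k < i, g k = f k) (h2 : g i = A)
    (h3 : ∀ k, i < k → k < n + 1 → g k = f (k-1)) :
    ∑ k ∈ Finset.range (n+1), g k = ∑ k ∈ Finset.range n, f k + A := by
  have e1 : ∑ k ∈ Finset.range n, f k
      = (∑ k ∈ Finset.range i, f k) + ∑ k ∈ Finset.Ico i n, f k := by
    rw [Finset.range_eq_Ico,
      ← Finset.sum_Ico_consecutive f (by omega : 0 ≤ i) (by omega : i ≤ n),
      ← Finset.range_eq_Ico]
  have e2 : ∑ k ∈ Finset.range (n+1), g k
      = (∑ k ∈ Finset.range i, g k) + g i + ∑ k ∈ Finset.Ico (i+1) (n+1), g k := by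
    rw [Finset.range_eq_Ico,
      ← Finset.sum_Ico_consecutive g (by omega : 0 ≤ i) (by omega : i ≤ n + 1),
      Finset.sum_eq_sum_Ico_succ_bot (by omega : i < n + 1) g, ← Finset.range_eq_Ico]
    ring
  have e3 : ∑ k ∈ Finset.range i, g k = ∑ k ∈ Finset.range i, f k :=
    Finset.sum_congr rfl fun k hk => h1 k (Finset.mem_range.mp hk)
  have e4 : ∑ k ∈ Finset.Ico (i+1) (n+1), g k = ∑ k ∈ Finset.Ico i n, f k := by
    rw [Finset.sum_Ico_eq_sum_range, Finset.sum_Ico_eq_sum_range]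
    rw [show n + 1 - (i+1) = n - i from by omega]
    refine Finset.sum_congr rfl fun j hj => ?_
    rw [Finset.mem_range] at hj
    rw [h3 (i + 1 + j) (by omega) (by omega), show i + 1 + j - 1 = i + j from by omega]
  rw [e2, e3, e4, e1, h2]
  ring

lemma df_eq (𝒟 : SegColl K) (o : Equiv.Perm (Fin K)) :
    𝒟.df o = (∑ k ∈ Finset.range 𝒟.L, ((2:ℤ)^(𝒟.e k + 1 - 𝒟.s k) - 1))
      - ∑ k ∈ Finset.range (𝒟.L - 1), ((2:ℤ)^(𝒟.e k + 1 - 𝒟.s (k+1)) - 1) := by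
  rw [SegColl.df]
  congr 1
  · refine Finset.sum_congr rfl fun k hk => ?_
    rw [Finset.mem_range] at hk
    rw [show 𝒟.seg o k = segIv o (𝒟.s k) (𝒟.e k) from rfl,
      card_segIv o (𝒟.e_lt k hk)]
  · refine Finset.sum_congr rfl fun k hk => ?_
    rw [Finset.mem_range] at hk
    rw [𝒟.ovl_eq o (by omega), card_segIv o (𝒟.e_lt k (by omega))]

end PartVI

section PartVII
variable {K : ℕ} (p : (Fin K → Bool) → ℝ) (o : Equiv.Perm (Fin K))

lemma case2 (hdist : IsDist p) (hpos : ∀ t, 0 < p t) (𝒪 : SegColl K)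
    (h𝒪 : memModel o 𝒪 p) {i u v : ℕ} (hi : i < 𝒪.L) (hi0 : 0 < i)
    (hsu : 𝒪.s i < u) (huv : u ≤ v + 1) (hconfL : v ≤ 𝒪.e (i-1))
    (hokR : i + 1 < 𝒪.L → u < 𝒪.s (i+1))
    (hV : Valid p o u v) :
    ∃ 𝒟 : SegColl K, memModel o 𝒟 p ∧ 𝒟.df o < 𝒪.df o := by
  have hK := 𝒪.posK
  have hold : ∀ j, j + 1 < 𝒪.L → Valid p o (𝒪.s (j+1)) (𝒪.e j) :=
    fun j hj => valid_of_mem p o hpos 𝒪 h𝒪.2 hj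
  have hei1 : 𝒪.e (i-1) < 𝒪.e i := by
    have h := 𝒪.e_mono (i-1) (by omega : (i-1) + 1 < 𝒪.L)
    rw [show i - 1 + 1 = i from by omega] at h; exact h
  have hei1K := 𝒪.e_lt (i-1) (by omega : i - 1 < 𝒪.L)
  have hVw : Valid p o u (𝒪.e (i-1)) :=
    widen_right p o hpos huv hconfL (by omega) hK hV
  -- structure fields
  have hsm' : ∀ k, k + 1 < 𝒪.L →
      (if k = i then u else 𝒪.s k) < (if k + 1 = i then u else 𝒪.s (k+1)) := by
    intro k hk
    split_ifs with h1 h2 h3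
    · omega
    · subst h1; exact hokR (by omega)
    · have := 𝒪.s_mono_le (show k ≤ i - 1 from by omega) (by omega : i - 1 < 𝒪.L)
      have h4 : 𝒪.s (i-1) < 𝒪.s i := by
        have h5 := 𝒪.s_mono (i-1) (by omega : (i-1) + 1 < 𝒪.L)
        rw [show i - 1 + 1 = i from by omega] at h5; exact h5
      omega
    · exact 𝒪.s_mono k hk
  have hsle' : ∀ k, k < 𝒪.L → (if k = i then u else 𝒪.s k) ≤ 𝒪.e k := by
    intro k hk
    split_ifs with h1
    · subst h1; omega
    · exact 𝒪.s_le_e k hk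
  have hsf' : (if 0 = i then u else 𝒪.s 0) = 0 := by
    rw [if_neg (by omega)]; exact 𝒪.s_first
  have hcov' : ∀ k, k + 1 < 𝒪.L →
      (if k + 1 = i then u else 𝒪.s (k+1)) ≤ 𝒪.e k + 1 := by
    intro k hk
    split_ifs with h1
    · have : k = i - 1 := by omega
      subst this; omega
    · exact 𝒪.covers k hk
  refine ⟨⟨𝒪.L, 𝒪.hL, (fun k => if k = i then u else 𝒪.s k), 𝒪.e, hsm', 𝒪.e_mono,
    hsle', hsf', 𝒪.e_last, 𝒪.e_lt, hcov'⟩, ⟨hdist, mem_of_valid p o hpos _ ?_⟩, ?_⟩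
  · -- validity of all cuts of 𝒟
    intro j hj
    show Valid p o (if j + 1 = i then u else 𝒪.s (j+1)) (𝒪.e j)
    split_ifs with h1
    · rw [show j = i - 1 from by omega]
      exact hVw
    · exact hold j hj
  · -- df decreases
    rw [df_eq, df_eq]
    show (∑ k ∈ Finset.range 𝒪.L, ((2:ℤ)^(𝒪.e k + 1 - (if k = i then u else 𝒪.s k)) - 1))
      - (∑ k ∈ Finset.range (𝒪.L - 1),
          ((2:ℤ)^(𝒪.e k + 1 - (if k + 1 = i then u else 𝒪.s (k+1))) - 1))
      < (∑ k ∈ Finset.range 𝒪.L, ((2:ℤ)^(𝒪.e k + 1 - 𝒪.s k) - 1))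
        - ∑ k ∈ Finset.range (𝒪.L - 1), ((2:ℤ)^(𝒪.e k + 1 - 𝒪.s (k+1)) - 1)
    have hS := sum_sub_except hi
      (fun k => ((2:ℤ)^(𝒪.e k + 1 - (if k = i then u else 𝒪.s k)) - 1))
      (fun k => ((2:ℤ)^(𝒪.e k + 1 - 𝒪.s k) - 1))
      (fun k _ hk => by simp only [if_neg hk])
    have hO := sum_sub_except (show i - 1 < 𝒪.L - 1 from by omega)
      (fun k => ((2:ℤ)^(𝒪.e k + 1 - (if k + 1 = i then u else 𝒪.s (k+1))) - 1))
      (fun k => ((2:ℤ)^(𝒪.e k + 1 - 𝒪.s (k+1)) - 1))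
      (fun k _ hk => by simp only [if_neg (show ¬(k + 1 = i) from by omega)])
    simp only [if_pos rfl, if_true, eq_self_iff_true, show i - 1 + 1 = i from by omega] at hS hO
    have hkey := pow_ineq (u - 𝒪.s i) (𝒪.e (i-1) + 1 - u) (𝒪.e i - 𝒪.e (i-1))
      (by omega) (by omega)
    rw [show u - 𝒪.s i + (𝒪.e (i-1) + 1 - u) + (𝒪.e i - 𝒪.e (i-1)) = 𝒪.e i + 1 - 𝒪.s i
        from by omega,
      show u - 𝒪.s i + (𝒪.e (i-1) + 1 - u) = 𝒪.e (i-1) + 1 - 𝒪.s i from by omega,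
      show 𝒪.e (i-1) + 1 - u + (𝒪.e i - 𝒪.e (i-1)) = 𝒪.e i + 1 - u from by omega] at hkey
    linarith
end PartVII

lemma case3 (hdist : IsDist p) (hpos : ∀ t, 0 < p t) (𝒪 : SegColl K)
    (h𝒪 : memModel o 𝒪 p) {i u v : ℕ} (hi1 : i + 1 < 𝒪.L)
    (hsv : 𝒪.s i ≤ v) (hve : v < 𝒪.e i) (huv : u ≤ v + 1)
    (hconfR : 𝒪.s (i+1) ≤ u) (hokL : 0 < i → 𝒪.e (i-1) < v)
    (hV : Valid p o u v) :
    ∃ 𝒟 : SegColl K, memModel o 𝒟 p ∧ 𝒟.df o < 𝒪.df o := by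
  have hK := 𝒪.posK
  have hold : ∀ j, j + 1 < 𝒪.L → Valid p o (𝒪.s (j+1)) (𝒪.e j) :=
    fun j hj => valid_of_mem p o hpos 𝒪 h𝒪.2 hj
  have hss := 𝒪.s_mono i hi1
  have hee := 𝒪.e_mono i hi1
  have heiK := 𝒪.e_lt i (by omega)
  have hs0 : 𝒪.s 0 = 0 := 𝒪.s_first
  have hs1 : 1 ≤ 𝒪.s (i+1) := by
    have := 𝒪.s_mono_le (show 0 ≤ i from by omega) (by omega : i < 𝒪.L)
    omega
  have hVw : Valid p o (𝒪.s (i+1)) v :=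
    widen_left p o hpos hs1 hconfR huv hK hV
  have hem' : ∀ k, k + 1 < 𝒪.L →
      (if k = i then v else 𝒪.e k) < (if k + 1 = i then v else 𝒪.e (k+1)) := by
    intro k hk
    split_ifs with h1 h2 h3
    · omega
    · subst h1; omega
    · have h4 : 𝒪.e (i-1) < v := hokL (by omega)
      have := 𝒪.e_mono_le (show k ≤ i - 1 from by omega) (by omega : i - 1 < 𝒪.L)
      omega
    · exact 𝒪.e_mono k hk
  have hsle' : ∀ k, k < 𝒪.L → 𝒪.s k ≤ (if k = i then v else 𝒪.e k) := by
    intro k hk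
    split_ifs with h1
    · subst h1; exact hsv
    · exact 𝒪.s_le_e k hk
  have hel' : (if 𝒪.L - 1 = i then v else 𝒪.e (𝒪.L - 1)) = K - 1 := by
    rw [if_neg (by omega)]; exact 𝒪.e_last
  have helt' : ∀ k, k < 𝒪.L → (if k = i then v else 𝒪.e k) < K := by
    intro k hk
    split_ifs with h1
    · omega
    · exact 𝒪.e_lt k hk
  have hcov' : ∀ k, k + 1 < 𝒪.L → 𝒪.s (k+1) ≤ (if k = i then v else 𝒪.e k) + 1 := by
    intro k hk
    split_ifs with h1
    · subst h1; omega
    · exact 𝒪.covers k hk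
  refine ⟨⟨𝒪.L, 𝒪.hL, 𝒪.s, (fun k => if k = i then v else 𝒪.e k), 𝒪.s_mono, hem',
    hsle', 𝒪.s_first, hel', helt', hcov'⟩, ⟨hdist, mem_of_valid p o hpos _ ?_⟩, ?_⟩
  · intro j hj
    show Valid p o (𝒪.s (j+1)) (if j = i then v else 𝒪.e j)
    split_ifs with h1
    · subst h1; exact hVw
    · exact hold j hj
  · rw [df_eq, df_eq]
    show (∑ k ∈ Finset.range 𝒪.L, ((2:ℤ)^((if k = i then v else 𝒪.e k) + 1 - 𝒪.s k) - 1))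
      - (∑ k ∈ Finset.range (𝒪.L - 1),
          ((2:ℤ)^((if k = i then v else 𝒪.e k) + 1 - 𝒪.s (k+1)) - 1))
      < (∑ k ∈ Finset.range 𝒪.L, ((2:ℤ)^(𝒪.e k + 1 - 𝒪.s k) - 1))
        - ∑ k ∈ Finset.range (𝒪.L - 1), ((2:ℤ)^(𝒪.e k + 1 - 𝒪.s (k+1)) - 1)
    have hS := sum_sub_except (show i < 𝒪.L from by omega)
      (fun k => ((2:ℤ)^((if k = i then v else 𝒪.e k) + 1 - 𝒪.s k) - 1))
      (fun k => ((2:ℤ)^(𝒪.e k + 1 - 𝒪.s k) - 1))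
      (fun k _ hk => by simp only [if_neg hk])
    have hO := sum_sub_except (show i < 𝒪.L - 1 from by omega)
      (fun k => ((2:ℤ)^((if k = i then v else 𝒪.e k) + 1 - 𝒪.s (k+1)) - 1))
      (fun k => ((2:ℤ)^(𝒪.e k + 1 - 𝒪.s (k+1)) - 1))
      (fun k _ hk => by simp only [if_neg hk])
    simp only [if_pos rfl, if_true, eq_self_iff_true] at hS hO
    have hkey := pow_ineq (𝒪.s (i+1) - 𝒪.s i) (v + 1 - 𝒪.s (i+1)) (𝒪.e i - v)
      (by omega) (by omega)
    rw [show 𝒪.s (i+1) - 𝒪.s i + (v + 1 - 𝒪.s (i+1)) + (𝒪.e i - v) = 𝒪.e i + 1 - 𝒪.s i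
        from by omega,
      show 𝒪.s (i+1) - 𝒪.s i + (v + 1 - 𝒪.s (i+1)) = v + 1 - 𝒪.s i from by omega,
      show v + 1 - 𝒪.s (i+1) + (𝒪.e i - v) = 𝒪.e i + 1 - 𝒪.s (i+1) from by omega] at hkey
    linarith

lemma case4 (hdist : IsDist p) (hpos : ∀ t, 0 < p t) (𝒪 : SegColl K)
    (h𝒪 : memModel o 𝒪 p) {i u v : ℕ} (hi0 : 0 < i) (hi1 : i + 1 < 𝒪.L)
    (huv : u ≤ v + 1) (hconfL : v ≤ 𝒪.e (i-1)) (hconfR : 𝒪.s (i+1) ≤ u)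
    (hV : Valid p o u v) :
    ∃ 𝒟 : SegColl K, memModel o 𝒟 p ∧ 𝒟.df o < 𝒪.df o := by
  have hK := 𝒪.posK
  have hold : ∀ j, j + 1 < 𝒪.L → Valid p o (𝒪.s (j+1)) (𝒪.e j) :=
    fun j hj => valid_of_mem p o hpos 𝒪 h𝒪.2 hj
  have hss := 𝒪.s_mono i hi1
  have hee := 𝒪.e_mono i hi1
  have hss' : 𝒪.s (i-1) < 𝒪.s i := by
    have h := 𝒪.s_mono (i-1) (by omega : (i-1) + 1 < 𝒪.L)
    rw [show i - 1 + 1 = i from by omega] at h; exact h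
  have hee' : 𝒪.e (i-1) < 𝒪.e i := by
    have h := 𝒪.e_mono (i-1) (by omega : (i-1) + 1 < 𝒪.L)
    rw [show i - 1 + 1 = i from by omega] at h; exact h
  have hei1K := 𝒪.e_lt (i-1) (by omega : i - 1 < 𝒪.L)
  have hs1 : 1 ≤ 𝒪.s (i+1) := by
    have h0 := 𝒪.s_first
    have := 𝒪.s_mono_le (show 0 ≤ i from by omega) (by omega : i < 𝒪.L)
    omega
  have hVw : Valid p o (𝒪.s (i+1)) (𝒪.e (i-1)) := by
    refine widen_left p o hpos hs1 hconfR (by omega) hK ?_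
    exact widen_right p o hpos huv hconfL (by omega) hK hV
  have hsm' : ∀ k, k + 1 < 𝒪.L - 1 →
      (if k < i then 𝒪.s k else 𝒪.s (k+1)) < (if k + 1 < i then 𝒪.s (k+1) else 𝒪.s (k+2)) := by
    intro k hk
    split_ifs with h1 h2 h3
    · exact 𝒪.s_mono k (by omega)
    · exact 𝒪.s_mono_lt (by omega) (by omega)
    · omega
    · exact 𝒪.s_mono (k+1) (by omega)
  have hem' : ∀ k, k + 1 < 𝒪.L - 1 →
      (if k < i then 𝒪.e k else 𝒪.e (k+1)) < (if k + 1 < i then 𝒪.e (k+1) else 𝒪.e (k+2)) := by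
    intro k hk
    split_ifs with h1 h2 h3
    · exact 𝒪.e_mono k (by omega)
    · exact 𝒪.e_mono_lt (by omega) (by omega)
    · omega
    · exact 𝒪.e_mono (k+1) (by omega)
  have hsle' : ∀ k, k < 𝒪.L - 1 →
      (if k < i then 𝒪.s k else 𝒪.s (k+1)) ≤ (if k < i then 𝒪.e k else 𝒪.e (k+1)) := by
    intro k hk
    split_ifs with h1
    · exact 𝒪.s_le_e k (by omega)
    · exact 𝒪.s_le_e (k+1) (by omega)
  have hsf' : (if 0 < i then 𝒪.s 0 else 𝒪.s 1) = 0 := by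
    rw [if_pos hi0]; exact 𝒪.s_first
  have hel' : (if 𝒪.L - 1 - 1 < i then 𝒪.e (𝒪.L - 1 - 1) else 𝒪.e (𝒪.L - 1 - 1 + 1)) = K - 1 := by
    rw [if_neg (by omega), show 𝒪.L - 1 - 1 + 1 = 𝒪.L - 1 from by omega]
    exact 𝒪.e_last
  have helt' : ∀ k, k < 𝒪.L - 1 → (if k < i then 𝒪.e k else 𝒪.e (k+1)) < K := by
    intro k hk
    split_ifs with h1
    · exact 𝒪.e_lt k (by omega)
    · exact 𝒪.e_lt (k+1) (by omega)
  have hcov' : ∀ k, k + 1 < 𝒪.L - 1 →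
      (if k + 1 < i then 𝒪.s (k+1) else 𝒪.s (k+2)) ≤ (if k < i then 𝒪.e k else 𝒪.e (k+1)) + 1 := by
    intro k hk
    split_ifs with h1 h2 h3
    · exact 𝒪.covers k (by omega)
    · omega
    · have : k + 1 = i := by omega
      have h5 : 𝒪.s (i+1) ≤ 𝒪.e (i-1) + 1 := by omega
      rw [show k + 2 = i + 1 from by omega, show k = i - 1 from by omega]
      exact h5
    · exact 𝒪.covers (k+1) (by omega)
  refine ⟨⟨𝒪.L - 1, by omega, (fun k => if k < i then 𝒪.s k else 𝒪.s (k+1)),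
    (fun k => if k < i then 𝒪.e k else 𝒪.e (k+1)), hsm', hem',
    hsle', hsf', hel', helt', hcov'⟩, ⟨hdist, mem_of_valid p o hpos _ ?_⟩, ?_⟩
  · intro j hj
    replace hj : j + 1 < 𝒪.L - 1 := hj
    show Valid p o (if j + 1 < i then 𝒪.s (j+1) else 𝒪.s (j+2))
      (if j < i then 𝒪.e j else 𝒪.e (j+1))
    split_ifs with h1 h2 h3
    · exact hold j (by omega)
    · omega
    · rw [show j + 2 = i + 1 from by omega, show j = i - 1 from by omega]
      exact hVw
    · exact hold (j+1) (by omega)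
  · rw [df_eq, df_eq]
    show (∑ k ∈ Finset.range (𝒪.L - 1),
        ((2:ℤ)^((if k < i then 𝒪.e k else 𝒪.e (k+1)) + 1
          - (if k < i then 𝒪.s k else 𝒪.s (k+1))) - 1))
      - (∑ k ∈ Finset.range (𝒪.L - 1 - 1),
          ((2:ℤ)^((if k < i then 𝒪.e k else 𝒪.e (k+1)) + 1
            - (if k + 1 < i then 𝒪.s (k+1) else 𝒪.s (k+2))) - 1))
      < (∑ k ∈ Finset.range 𝒪.L, ((2:ℤ)^(𝒪.e k + 1 - 𝒪.s k) - 1))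
        - ∑ k ∈ Finset.range (𝒪.L - 1), ((2:ℤ)^(𝒪.e k + 1 - 𝒪.s (k+1)) - 1)
    have hS := sum_skip (show i < 𝒪.L from by omega)
      (f := fun k => ((2:ℤ)^(𝒪.e k + 1 - 𝒪.s k) - 1))
      (fun k => ((2:ℤ)^((if k < i then 𝒪.e k else 𝒪.e (k+1)) + 1
          - (if k < i then 𝒪.s k else 𝒪.s (k+1))) - 1))
      (fun k hk => by simp only [if_pos hk])
      (fun k hk1 hk2 => by simp only [if_neg (show ¬ k < i from by omega)])
    have hO := sum_skip (show i < 𝒪.L - 1 from by omega)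
      (f := fun k => if k = i - 1 then ((2:ℤ)^(𝒪.e (i-1) + 1 - 𝒪.s (i+1)) - 1)
        else ((2:ℤ)^(𝒪.e k + 1 - 𝒪.s (k+1)) - 1))
      (fun k => ((2:ℤ)^((if k < i then 𝒪.e k else 𝒪.e (k+1)) + 1
          - (if k + 1 < i then 𝒪.s (k+1) else 𝒪.s (k+2))) - 1))
      (fun k hk => by
        by_cases h : k = i - 1
        · subst h
          rw [show i - 1 + 1 = i from by omega, show i - 1 + 2 = i + 1 from by omega]
          simp only [if_pos rfl, if_pos (show i - 1 < i from by omega),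
            if_neg (show ¬ i < i from by omega), if_true]
        · simp only [if_neg h, if_pos hk, if_pos (show k + 1 < i from by omega)])
      (fun k hk1 hk2 => by
        simp only [if_neg (show ¬ k < i from by omega),
          if_neg (show ¬ (k + 1 < i) from by omega),
          if_neg (show ¬ (k + 1 = i - 1) from by omega)])
    have hO2 := sum_sub_except (show i - 1 < 𝒪.L - 1 from by omega)
      (fun k => if k = i - 1 then ((2:ℤ)^(𝒪.e (i-1) + 1 - 𝒪.s (i+1)) - 1)
        else ((2:ℤ)^(𝒪.e k + 1 - 𝒪.s (k+1)) - 1))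
      (fun k => ((2:ℤ)^(𝒪.e k + 1 - 𝒪.s (k+1)) - 1))
      (fun k _ hk => by simp only [if_neg hk])
    simp only [if_pos rfl, if_true, eq_self_iff_true,
      if_neg (show ¬ (i = i - 1) from by omega), if_pos (show i - 1 < i from by omega),
      show i - 1 + 1 = i from by omega] at hS hO hO2
    have hkey := pow_ineq (𝒪.s (i+1) - 𝒪.s i) (𝒪.e (i-1) + 1 - 𝒪.s (i+1))
      (𝒪.e i - 𝒪.e (i-1)) (by omega) (by omega)
    rw [show 𝒪.s (i+1) - 𝒪.s i + (𝒪.e (i-1) + 1 - 𝒪.s (i+1)) + (𝒪.e i - 𝒪.e (i-1))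
        = 𝒪.e i + 1 - 𝒪.s i from by omega,
      show 𝒪.s (i+1) - 𝒪.s i + (𝒪.e (i-1) + 1 - 𝒪.s (i+1)) = 𝒪.e (i-1) + 1 - 𝒪.s i
        from by omega,
      show 𝒪.e (i-1) + 1 - 𝒪.s (i+1) + (𝒪.e i - 𝒪.e (i-1)) = 𝒪.e i + 1 - 𝒪.s (i+1)
        from by omega] at hkey
    linarith

lemma case1 (hdist : IsDist p) (hpos : ∀ t, 0 < p t) (𝒪 : SegColl K)
    (h𝒪 : memModel o 𝒪 p) {i u v : ℕ} (hi : i < 𝒪.L)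
    (hsu : 𝒪.s i < u) (huv : u ≤ v + 1) (hsv : 𝒪.s i ≤ v) (hve : v < 𝒪.e i)
    (hokL : 0 < i → 𝒪.e (i-1) < v) (hokR : i + 1 < 𝒪.L → u < 𝒪.s (i+1))
    (hV : Valid p o u v) :
    ∃ 𝒟 : SegColl K, memModel o 𝒟 p ∧ 𝒟.df o < 𝒪.df o := by
  have hK := 𝒪.posK
  have hold : ∀ j, j + 1 < 𝒪.L → Valid p o (𝒪.s (j+1)) (𝒪.e j) :=
    fun j hj => valid_of_mem p o hpos 𝒪 h𝒪.2 hj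
  have heiK := 𝒪.e_lt i hi
  have hsm' : ∀ k, k + 1 < 𝒪.L + 1 →
      (if k ≤ i then 𝒪.s k else if k = i + 1 then u else 𝒪.s (k-1))
        < (if k + 1 ≤ i then 𝒪.s (k+1) else if k + 1 = i + 1 then u else 𝒪.s (k+1-1)) := by
    intro k hk
    rcases (by omega : k + 1 ≤ i ∨ k = i ∨ k = i + 1 ∨ i + 2 ≤ k) with h | h | h | h
    · rw [if_pos (show k ≤ i from by omega), if_pos h]
      exact 𝒪.s_mono k (by omega)
    · simp only [h, if_pos (le_refl i), if_neg (show ¬ i + 1 ≤ i from by omega), if_true]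
      exact hsu
    · simp only [h, if_neg (show ¬ i + 1 ≤ i from by omega),
        if_neg (show ¬ i + 1 + 1 ≤ i from by omega),
        if_neg (show ¬ i + 1 + 1 = i + 1 from by omega),
        show i + 1 + 1 - 1 = i + 1 from by omega, if_true]
      exact hokR (by omega)
    · rw [if_neg (show ¬ k ≤ i from by omega), if_neg (show ¬ k = i + 1 from by omega),
        if_neg (show ¬ k + 1 ≤ i from by omega),
        if_neg (show ¬ k + 1 = i + 1 from by omega),
        show k + 1 - 1 = k from by omega]
      have h8 := 𝒪.s_mono (k-1) (show k - 1 + 1 < 𝒪.L from by omega)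
      rw [show k - 1 + 1 = k from by omega] at h8
      exact h8
  have hem' : ∀ k, k + 1 < 𝒪.L + 1 →
      (if k < i then 𝒪.e k else if k = i then v else 𝒪.e (k-1))
        < (if k + 1 < i then 𝒪.e (k+1) else if k + 1 = i then v else 𝒪.e (k+1-1)) := by
    intro k hk
    rcases (by omega : k + 1 < i ∨ k + 1 = i ∨ k = i ∨ i + 1 ≤ k) with h | h | h | h
    · rw [if_pos (show k < i from by omega), if_pos h]
      exact 𝒪.e_mono k (by omega)
    · rw [if_pos (show k < i from by omega), if_neg (show ¬ k + 1 < i from by omega),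
        if_pos h]
      have h8 : 𝒪.e k ≤ 𝒪.e (i-1) := 𝒪.e_mono_le (by omega) (by omega)
      have h9 := hokL (by omega)
      omega
    · simp only [h, if_neg (lt_irrefl i), if_neg (show ¬ i + 1 < i from by omega),
        if_neg (show ¬ i + 1 = i from by omega), show i + 1 - 1 = i from by omega, if_true]
      exact hve
    · rw [if_neg (show ¬ k < i from by omega), if_neg (show ¬ k = i from by omega),
        if_neg (show ¬ k + 1 < i from by omega),
        if_neg (show ¬ k + 1 = i from by omega), show k + 1 - 1 = k from by omega]
      have h8 := 𝒪.e_mono (k-1) (show k - 1 + 1 < 𝒪.L from by omega)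
      rw [show k - 1 + 1 = k from by omega] at h8
      exact h8
  have hsle' : ∀ k, k < 𝒪.L + 1 →
      (if k ≤ i then 𝒪.s k else if k = i + 1 then u else 𝒪.s (k-1))
        ≤ (if k < i then 𝒪.e k else if k = i then v else 𝒪.e (k-1)) := by
    intro k hk
    rcases (by omega : k < i ∨ k = i ∨ k = i + 1 ∨ i + 2 ≤ k) with h | h | h | h
    · rw [if_pos (show k ≤ i from by omega), if_pos h]
      exact 𝒪.s_le_e k (by omega)
    · simp only [h, if_pos (le_refl i), if_neg (lt_irrefl i), if_true]
      exact hsv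
    · simp only [h, if_neg (show ¬ i + 1 ≤ i from by omega),
        if_neg (show ¬ i + 1 < i from by omega),
        if_neg (show ¬ i + 1 = i from by omega),
        show i + 1 - 1 = i from by omega, if_true]
      omega
    · rw [if_neg (show ¬ k ≤ i from by omega), if_neg (show ¬ k = i + 1 from by omega),
        if_neg (show ¬ k < i from by omega), if_neg (show ¬ k = i from by omega)]
      exact 𝒪.s_le_e (k-1) (by omega)
  have hsf' : (if 0 ≤ i then 𝒪.s 0 else if 0 = i + 1 then u else 𝒪.s (0-1)) = 0 := by
    rw [if_pos (by omega : 0 ≤ i)]; exact 𝒪.s_first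
  have hel' : (if 𝒪.L + 1 - 1 < i then 𝒪.e (𝒪.L + 1 - 1)
      else if 𝒪.L + 1 - 1 = i then v else 𝒪.e (𝒪.L + 1 - 1 - 1)) = K - 1 := by
    rw [if_neg (by omega), if_neg (by omega),
      show 𝒪.L + 1 - 1 - 1 = 𝒪.L - 1 from by omega]
    exact 𝒪.e_last
  have helt' : ∀ k, k < 𝒪.L + 1 →
      (if k < i then 𝒪.e k else if k = i then v else 𝒪.e (k-1)) < K := by
    intro k hk
    rcases (by omega : k < i ∨ k = i ∨ i + 1 ≤ k) with h | h | h
    · rw [if_pos h]; exact 𝒪.e_lt k (by omega)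
    · rw [if_neg (show ¬ k < i from by omega), if_pos h]; omega
    · rw [if_neg (show ¬ k < i from by omega), if_neg (show ¬ k = i from by omega)]
      exact 𝒪.e_lt (k-1) (by omega)
  have hcov' : ∀ k, k + 1 < 𝒪.L + 1 →
      (if k + 1 ≤ i then 𝒪.s (k+1) else if k + 1 = i + 1 then u else 𝒪.s (k+1-1))
        ≤ (if k < i then 𝒪.e k else if k = i then v else 𝒪.e (k-1)) + 1 := by
    intro k hk
    rcases (by omega : k + 1 ≤ i ∨ k = i ∨ k = i + 1 ∨ i + 2 ≤ k) with h | h | h | h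
    · rw [if_pos h, if_pos (show k < i from by omega)]
      exact 𝒪.covers k (by omega)
    · simp only [h, if_neg (show ¬ i + 1 ≤ i from by omega), if_neg (lt_irrefl i),
        if_true]
      omega
    · simp only [h, if_neg (show ¬ i + 1 + 1 ≤ i from by omega),
        if_neg (show ¬ i + 1 + 1 = i + 1 from by omega),
        if_neg (show ¬ i + 1 < i from by omega),
        if_neg (show ¬ i + 1 = i from by omega),
        show i + 1 + 1 - 1 = i + 1 from by omega, show i + 1 - 1 = i from by omega]
      exact 𝒪.covers i (by omega)
    · rw [if_neg (show ¬ k + 1 ≤ i from by omega),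
        if_neg (show ¬ k + 1 = i + 1 from by omega),
        if_neg (show ¬ k < i from by omega), if_neg (show ¬ k = i from by omega),
        show k + 1 - 1 = k from by omega]
      have h8 := 𝒪.covers (k-1) (show k - 1 + 1 < 𝒪.L from by omega)
      rw [show k - 1 + 1 = k from by omega] at h8
      exact h8
  refine ⟨⟨𝒪.L + 1, by omega,
    (fun k => if k ≤ i then 𝒪.s k else if k = i + 1 then u else 𝒪.s (k-1)),
    (fun k => if k < i then 𝒪.e k else if k = i then v else 𝒪.e (k-1)),
    hsm', hem', hsle', hsf', hel', helt', hcov'⟩,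
    ⟨hdist, mem_of_valid p o hpos _ ?_⟩, ?_⟩
  · intro j hj
    replace hj : j + 1 < 𝒪.L + 1 := hj
    show Valid p o (if j + 1 ≤ i then 𝒪.s (j+1) else if j + 1 = i + 1 then u else 𝒪.s (j+1-1))
      (if j < i then 𝒪.e j else if j = i then v else 𝒪.e (j-1))
    rcases (by omega : j + 1 ≤ i ∨ j = i ∨ i + 1 ≤ j) with h | h | h
    · rw [if_pos h, if_pos (show j < i from by omega)]
      exact hold j (by omega)
    · simp only [h, if_neg (show ¬ i + 1 ≤ i from by omega), if_neg (lt_irrefl i),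
        if_true]
      exact hV
    · rw [if_neg (show ¬ j + 1 ≤ i from by omega), if_neg (show ¬ j < i from by omega),
        if_neg (show ¬ j = i from by omega),
        if_neg (show ¬ j + 1 = i + 1 from by omega), show j + 1 - 1 = j from by omega]
      have h8 := hold (j-1) (show j - 1 + 1 < 𝒪.L from by omega)
      rw [show j - 1 + 1 = j from by omega] at h8
      exact h8
  · rw [df_eq, df_eq]
    show (∑ k ∈ Finset.range (𝒪.L + 1),
        ((2:ℤ)^((if k < i then 𝒪.e k else if k = i then v else 𝒪.e (k-1)) + 1
          - (if k ≤ i then 𝒪.s k else if k = i + 1 then u else 𝒪.s (k-1))) - 1))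
      - (∑ k ∈ Finset.range (𝒪.L + 1 - 1),
          ((2:ℤ)^((if k < i then 𝒪.e k else if k = i then v else 𝒪.e (k-1)) + 1
            - (if k + 1 ≤ i then 𝒪.s (k+1) else if k + 1 = i + 1 then u else 𝒪.s (k+1-1))) - 1))
      < (∑ k ∈ Finset.range 𝒪.L, ((2:ℤ)^(𝒪.e k + 1 - 𝒪.s k) - 1))
        - ∑ k ∈ Finset.range (𝒪.L - 1), ((2:ℤ)^(𝒪.e k + 1 - 𝒪.s (k+1)) - 1)
    rw [show 𝒪.L + 1 - 1 = 𝒪.L from by omega]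
    have hS := sum_insert1 (show i + 1 ≤ 𝒪.L from by omega)
      (f := fun k => if k = i then ((2:ℤ)^(v + 1 - 𝒪.s i) - 1)
        else ((2:ℤ)^(𝒪.e k + 1 - 𝒪.s k) - 1))
      ((2:ℤ)^(𝒪.e i + 1 - u) - 1)
      (fun k => ((2:ℤ)^((if k < i then 𝒪.e k else if k = i then v else 𝒪.e (k-1)) + 1
          - (if k ≤ i then 𝒪.s k else if k = i + 1 then u else 𝒪.s (k-1))) - 1))
      (fun k hk => by
        by_cases h : k = i
        · simp only [h, if_neg (lt_irrefl i), if_pos (le_refl i), if_true]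
        · rw [if_pos (show k < i from by omega), if_pos (show k ≤ i from by omega),
            if_neg h])
      (by
        rw [if_neg (show ¬ i + 1 < i from by omega),
          if_neg (show ¬ i + 1 = i from by omega),
          if_neg (show ¬ i + 1 ≤ i from by omega),
          if_pos (show i + 1 = i + 1 from rfl),
          show i + 1 - 1 = i from by omega])
      (fun k hk1 hk2 => by
        rw [if_neg (show ¬ k < i from by omega), if_neg (show ¬ k = i from by omega),
          if_neg (show ¬ k ≤ i from by omega), if_neg (show ¬ k = i + 1 from by omega),
          if_neg (show ¬ k - 1 = i from by omega)])
    have hS2 := sum_sub_except hi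
      (fun k => if k = i then ((2:ℤ)^(v + 1 - 𝒪.s i) - 1)
        else ((2:ℤ)^(𝒪.e k + 1 - 𝒪.s k) - 1))
      (fun k => ((2:ℤ)^(𝒪.e k + 1 - 𝒪.s k) - 1))
      (fun k _ hk => by simp only [if_neg hk])
    have hO := sum_insert1 (show i ≤ 𝒪.L - 1 from by omega)
      (f := fun k => ((2:ℤ)^(𝒪.e k + 1 - 𝒪.s (k+1)) - 1))
      ((2:ℤ)^(v + 1 - u) - 1)
      (fun k => ((2:ℤ)^((if k < i then 𝒪.e k else if k = i then v else 𝒪.e (k-1)) + 1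
          - (if k + 1 ≤ i then 𝒪.s (k+1) else if k + 1 = i + 1 then u else 𝒪.s (k+1-1))) - 1))
      (fun k hk => by
        rw [if_pos (show k < i from by omega), if_pos (show k + 1 ≤ i from by omega)])
      (by
        rw [if_neg (lt_irrefl i), if_pos (show i = i from rfl),
          if_neg (show ¬ i + 1 ≤ i from by omega),
          if_pos (show i + 1 = i + 1 from rfl)])
      (fun k hk1 hk2 => by
        by_cases h : k = i + 1
        · simp only [h, if_neg (show ¬ i + 1 < i from by omega),
            if_neg (show ¬ i + 1 = i from by omega),
            if_neg (show ¬ i + 1 + 1 ≤ i from by omega),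
            if_neg (show ¬ i + 1 + 1 = i + 1 from by omega),
            show i + 1 - 1 = i from by omega, show i + 1 + 1 - 1 = i + 1 from by omega]
        · rw [if_neg (show ¬ k < i from by omega), if_neg (show ¬ k = i from by omega),
            if_neg (show ¬ k + 1 ≤ i from by omega),
            if_neg (show ¬ k + 1 = i + 1 from by omega),
            show k + 1 - 1 = k from by omega, show k - 1 + 1 = k from by omega])
    rw [show 𝒪.L - 1 + 1 = 𝒪.L from by omega] at hO
    have hkey := pow_ineq (u - 𝒪.s i) (v + 1 - u) (𝒪.e i - v) (by omega) (by omega)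
    rw [show u - 𝒪.s i + (v + 1 - u) + (𝒪.e i - v) = 𝒪.e i + 1 - 𝒪.s i from by omega,
      show u - 𝒪.s i + (v + 1 - u) = v + 1 - 𝒪.s i from by omega,
      show v + 1 - u + (𝒪.e i - v) = 𝒪.e i + 1 - u from by omega] at hkey
    simp only [if_pos rfl, if_true, eq_self_iff_true] at hS2
    linarith

section PartVIII
variable {K : ℕ} (p : (Fin K → Bool) → ℝ) (o : Equiv.Perm (Fin K))

lemma segIv_mono {a b a' b' : ℕ} (ha : a' ≤ a) (hb : b ≤ b') :
    segIv o a b ⊆ segIv o a' b' := by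
  intro x hx; rw [mem_segIv] at hx ⊢; omega

lemma apply_mem_segIv {a b n : ℕ} (hn : n < K) (h1 : a ≤ n) (h2 : n ≤ b) :
    o ⟨n, hn⟩ ∈ segIv o a b := by
  rw [mem_segIv, Equiv.symm_apply_apply]
  exact ⟨h1, h2⟩

lemma pos_of_mem_segIv {a b : ℕ} {x : Fin K} (h : x ∈ segIv o a b) :
    a ≤ ((o.symm x : Fin K) : ℕ) ∧ ((o.symm x : Fin K) : ℕ) ≤ b :=
  (mem_segIv o).mp h

lemma segIv_subset_endpoints {a b a' b' : ℕ} (hab : a ≤ b) (hb : b < K)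
    (h : segIv o a b ⊆ segIv o a' b') : a' ≤ a ∧ b ≤ b' := by
  have h1 := (mem_segIv o).mp (h (apply_mem_segIv o (show a < K from by omega) (le_refl a) hab))
  have h2 := (mem_segIv o).mp (h (apply_mem_segIv o hb hab (le_refl b)))
  rw [Equiv.symm_apply_apply] at h1 h2
  simp only at h1 h2
  omega

lemma segIv_eq_endpoints {a b a' b' : ℕ} (hab : a ≤ b) (hb : b < K)
    (hab' : a' ≤ b') (hb' : b' < K)
    (h : segIv o a b = segIv o a' b') : a = a' ∧ b = b' := by
  have h1 := segIv_subset_endpoints o hab hb (le_of_eq h)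
  have h2 := segIv_subset_endpoints o hab' hb' (ge_of_eq h)
  omega

/-- Antichain: the segments of a collection are pairwise incomparable. -/
lemma SegColl.seg_inj (𝒞 : SegColl K) {i j : ℕ} (hi : i < 𝒞.L) (hj : j < 𝒞.L)
    (h : 𝒞.seg o i ⊆ 𝒞.seg o j) : i = j := by
  have h1 := segIv_subset_endpoints o (𝒞.s_le_e i hi) (𝒞.e_lt i hi) h
  rcases Nat.lt_trichotomy i j with hlt | heq | hgt
  · have := 𝒞.s_mono_lt hlt hj; omega
  · exact heq
  · have := 𝒞.e_mono_lt hgt hi; omega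

/-- Main refinement lemma. -/
lemma refines (hdist : IsDist p) (hpos : ∀ t, 0 < p t) (𝒪 : SegColl K)
    (h𝒪 : memModel o 𝒪 p)
    (hmin : ∀ 𝒞 : SegColl K, memModel o 𝒞 p → 𝒪.df o ≤ 𝒞.df o) :
    ∀ 𝒞 : SegColl K, memModel o 𝒞 p → ∀ i < 𝒪.L, ∃ j < 𝒞.L, 𝒪.seg o i ⊆ 𝒞.seg o j := by
  intro 𝒞 h𝒞 i hi
  by_contra hno
  push_neg at hno
  have hK := 𝒪.posK
  have hCL := 𝒞.hL
  classical
  set P : ℕ → Prop := fun n => 𝒞.s n ≤ 𝒪.s i with hP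
  set j := Nat.findGreatest P (𝒞.L - 1) with hj
  have hj_le : j ≤ 𝒞.L - 1 := Nat.findGreatest_le _
  have hjL : j < 𝒞.L := by omega
  have hPj : 𝒞.s j ≤ 𝒪.s i := by
    have : P j := Nat.findGreatest_spec (Nat.zero_le _) (show P 0 by
      simp only [hP, 𝒞.s_first]; omega)
    exact this
  have hmax : ∀ m, j < m → m ≤ 𝒞.L - 1 → ¬ (𝒞.s m ≤ 𝒪.s i) := by
    intro m h1 h2 h3
    exact Nat.findGreatest_is_greatest h1 h2 h3
  have hsiei := 𝒪.s_le_e i hi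
  have heiK := 𝒪.e_lt i hi
  have hse : 𝒪.s i ≤ 𝒞.e j := by
    by_cases h : j = 𝒞.L - 1
    · have := 𝒞.e_last; rw [← h] at this; omega
    · have hj1 : j + 1 < 𝒞.L := by omega
      have h1 := hmax (j+1) (by omega) (by omega)
      have h2 := 𝒞.covers j hj1
      omega
  have hee : 𝒞.e j < 𝒪.e i := by
    by_contra h
    push_neg at h
    exact hno j hjL (segIv_mono o hPj h)
  have hjL1 : j + 1 < 𝒞.L := by
    by_contra h
    have : j = 𝒞.L - 1 := by omega
    have h2 := 𝒞.e_last; rw [← this] at h2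
    omega
  have hsu : 𝒪.s i < 𝒞.s (j+1) := by
    by_contra h
    push_neg at h
    exact hmax (j+1) (by omega) (by omega) h
  have huv : 𝒞.s (j+1) ≤ 𝒞.e j + 1 := 𝒞.covers j hjL1
  have hV : Valid p o (𝒞.s (j+1)) (𝒞.e j) := valid_of_mem p o hpos 𝒞 h𝒞.2 hjL1
  by_cases hL : 0 < i ∧ 𝒞.e j ≤ 𝒪.e (i-1)
  · by_cases hR : i + 1 < 𝒪.L ∧ 𝒪.s (i+1) ≤ 𝒞.s (j+1)
    · obtain ⟨𝒟, hD1, hD2⟩ := case4 p o hdist hpos 𝒪 h𝒪 hL.1 hR.1 huv hL.2 hR.2 hV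
      have := hmin 𝒟 hD1; omega
    · obtain ⟨𝒟, hD1, hD2⟩ := case2 p o hdist hpos 𝒪 h𝒪 hi hL.1 hsu huv hL.2
        (fun h1 => by
          have h2 := (not_and.mp hR) h1
          omega) hV
      have := hmin 𝒟 hD1; omega
  · by_cases hR : i + 1 < 𝒪.L ∧ 𝒪.s (i+1) ≤ 𝒞.s (j+1)
    · obtain ⟨𝒟, hD1, hD2⟩ := case3 p o hdist hpos 𝒪 h𝒪 hR.1 hse hee huv hR.2
        (fun h0 => by
          have h2 := (not_and.mp hL) h0
          omega) hV
      have := hmin 𝒟 hD1; omega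
    · obtain ⟨𝒟, hD1, hD2⟩ := case1 p o hdist hpos 𝒪 h𝒪 hi hsu huv hse hee
        (fun h0 => by
          have h2 := (not_and.mp hL) h0
          omega)
        (fun h1 => by
          have h2 := (not_and.mp hR) h1
          omega) hV
      have := hmin 𝒟 hD1; omega

/-- Mutual refinement implies identical segment lists. -/
lemma same_of_mutual (𝒪' 𝒪 : SegColl K)
    (hAB : ∀ i < 𝒪'.L, ∃ j < 𝒪.L, 𝒪'.seg o i ⊆ 𝒪.seg o j)
    (hBA : ∀ j < 𝒪.L, ∃ i < 𝒪'.L, 𝒪.seg o j ⊆ 𝒪'.seg o i) :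
    SegColl.SameSegs o 𝒪' 𝒪 := by
  classical
  have hE : ∀ i, ∃ j, i < 𝒪'.L → (j < 𝒪.L ∧ 𝒪'.seg o i = 𝒪.seg o j) := by
    intro i
    by_cases hi : i < 𝒪'.L
    · obtain ⟨j, hj, hsub⟩ := hAB i hi
      obtain ⟨k, hk, hsub2⟩ := hBA j hj
      have hik : i = k := 𝒪'.seg_inj o hi hk (hsub.trans hsub2)
      subst hik
      exact ⟨j, fun _ => ⟨hj, Finset.Subset.antisymm hsub hsub2⟩⟩
    · exact ⟨0, fun h => absurd h hi⟩
  have hE' : ∀ j, ∃ i, j < 𝒪.L → (i < 𝒪'.L ∧ 𝒪.seg o j = 𝒪'.seg o i) := by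
    intro j
    by_cases hj : j < 𝒪.L
    · obtain ⟨i, hi, hsub⟩ := hBA j hj
      obtain ⟨k, hk, hsub2⟩ := hAB i hi
      have hjk : j = k := 𝒪.seg_inj o hj hk (hsub.trans hsub2)
      subst hjk
      exact ⟨i, fun _ => ⟨hi, Finset.Subset.antisymm hsub hsub2⟩⟩
    · exact ⟨0, fun h => absurd h hj⟩
  choose J hJ using hE
  choose G hG using hE'
  -- endpoints agree along J
  have hJend : ∀ i, i < 𝒪'.L → 𝒪'.s i = 𝒪.s (J i) ∧ 𝒪'.e i = 𝒪.e (J i) := by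
    intro i hi
    obtain ⟨hJL, hJeq⟩ := hJ i hi
    exact segIv_eq_endpoints o (𝒪'.s_le_e i hi) (𝒪'.e_lt i hi)
      (𝒪.s_le_e _ hJL) (𝒪.e_lt _ hJL) hJeq
  have hGend : ∀ j, j < 𝒪.L → 𝒪.s j = 𝒪'.s (G j) ∧ 𝒪.e j = 𝒪'.e (G j) := by
    intro j hj
    obtain ⟨hGL, hGeq⟩ := hG j hj
    exact segIv_eq_endpoints o (𝒪.s_le_e j hj) (𝒪.e_lt j hj)
      (𝒪'.s_le_e _ hGL) (𝒪'.e_lt _ hGL) hGeq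
  have hJmono : ∀ i, i + 1 < 𝒪'.L → J i < J (i+1) := by
    intro i hi
    have h1 := hJend i (by omega)
    have h2 := hJend (i+1) hi
    have h3 := 𝒪'.s_mono i hi
    by_contra h
    push_neg at h
    have := 𝒪.s_mono_le h (hJ i (by omega)).1
    omega
  have hGmono : ∀ j, j + 1 < 𝒪.L → G j < G (j+1) := by
    intro j hj
    have h1 := hGend j (by omega)
    have h2 := hGend (j+1) hj
    have h3 := 𝒪.s_mono j hj
    by_contra h
    push_neg at h
    have := 𝒪'.s_mono_le h (hG j (by omega)).1
    omega
  have hJge : ∀ i, i < 𝒪'.L → i ≤ J i := by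
    intro i
    induction i with
    | zero => omega
    | succ n ih =>
      intro h
      have h1 := ih (by omega)
      have h2 := hJmono n h
      omega
  have hGge : ∀ j, j < 𝒪.L → j ≤ G j := by
    intro j
    induction j with
    | zero => omega
    | succ n ih =>
      intro h
      have h1 := ih (by omega)
      have h2 := hGmono n h
      omega
  have hGJ : ∀ i, i < 𝒪'.L → G (J i) = i := by
    intro i hi
    obtain ⟨hJL, hJeq⟩ := hJ i hi
    obtain ⟨hGL, hGeq⟩ := hG (J i) hJL
    have h2 : i = G (J i) := 𝒪'.seg_inj o hi hGL (le_of_eq (hJeq.trans hGeq))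
    omega
  have hJid : ∀ i, i < 𝒪'.L → J i = i := by
    intro i hi
    have h1 := hJge i hi
    have h2 := hGge (J i) (hJ i hi).1
    have h3 := hGJ i hi
    omega
  have hLL : 𝒪'.L = 𝒪.L := by
    have hL1 := 𝒪'.hL
    have hL2 := 𝒪.hL
    have h1 : 𝒪'.L - 1 ≤ J (𝒪'.L - 1) := hJge _ (by omega)
    have h2 : J (𝒪'.L - 1) < 𝒪.L := (hJ _ (by omega : 𝒪'.L - 1 < 𝒪'.L)).1
    have h3 : 𝒪.L - 1 ≤ G (𝒪.L - 1) := hGge _ (by omega)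
    have h4 : G (𝒪.L - 1) < 𝒪'.L := (hG _ (by omega : 𝒪.L - 1 < 𝒪.L)).1
    omega
  refine ⟨hLL, fun i hi => ?_⟩
  have h1 := (hJ i hi).2
  rw [hJid i hi] at h1
  exact h1

end PartVIII

/-- If `𝒪 ∈ Seg(o)` contains `p` in its model and minimizes `df` among
such collections, then every collection `𝒞 ∈ Seg(o)` with `p ∈ M(𝒞)` is refined by `𝒪`
(every segment of `𝒪` lies in some segment of `𝒞`), and `𝒪` is unique. -/
theorem opt_refines_and_unique {K : ℕ} (p : (Fin K → Bool) → ℝ)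
    (hdist : IsDist p) (hpos : ∀ t, 0 < p t) (o : Equiv.Perm (Fin K))
    (𝒪 : SegColl K) (h𝒪 : memModel o 𝒪 p)
    (hmin : ∀ 𝒞 : SegColl K, memModel o 𝒞 p → 𝒪.df o ≤ 𝒞.df o) :
    (∀ 𝒞 : SegColl K, memModel o 𝒞 p →
      ∀ i < 𝒪.L, ∃ j < 𝒞.L, 𝒪.seg o i ⊆ 𝒞.seg o j) ∧
    (∀ 𝒪' : SegColl K, memModel o 𝒪' p →
      (∀ 𝒞 : SegColl K, memModel o 𝒞 p → 𝒪'.df o ≤ 𝒞.df o) →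
      SegColl.SameSegs o 𝒪' 𝒪) := by
  constructor
  · exact refines p o hdist hpos 𝒪 h𝒪 hmin
  · intro 𝒪' h𝒪' hmin'
    exact same_of_mutual o 𝒪' 𝒪
      (refines p o hdist hpos 𝒪' h𝒪' hmin' 𝒪 h𝒪)
      (refines p o hdist hpos 𝒪 h𝒪 hmin 𝒪' h𝒪')
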